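/- Let $\sigma\ge 1$ and $N_1\ge 1$. Suppose $H,G:\mathbb{Z}\to\mathbb{C}$ satisfy: $|G(s)|\le 1$ for all $s$, $G(s)=0$ for $0<|s|\le N_2$, and $|H(s)|\le C\exp\big(-\tfrac12|s/(8N_1)|^{(\sigma+1)/(4\sigma)}\big)$ for $|s|\ge 8N_1$. Then for all $s$ with $|s|<N_2/4$, $|H*G(s)-H(s)G(0)|\le C\sum_{|t|\ge N_2}\exp\big(-\tfrac12|t/(16N_1)|^{(\sigma+1)/(4\sigma)}\big)$; in particular, if $N_2$ is sufficiently large depending on $N_1$ and $\sigma$, then $|H*G(s)-H(s)G(0)|\le N_2^{-99}$. -/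

import Mathlib

open Real

/-- Core bound: `exp(-(b*(x/M)^α)) ≤ k!/b^k * (M/x)^m` when `M ≤ x` and `m ≤ α*k`. -/
lemma exp_core (b M x α : ℝ) (hb : 0 < b) (hα : 0 ≤ α) (hM : 0 < M) (hx : M ≤ x)
    (k m : ℕ) (hkm : (m:ℝ) ≤ α * k) :
    Real.exp (-(b * (x/M)^α)) ≤ (Nat.factorial k : ℝ)/b^k * (M/x)^m := by
  have hx0 : 0 < x := hM.trans_le hx
  have hy1 : (1:ℝ) ≤ x / M := (one_le_div hM).2 hx
  have hy0 : (0:ℝ) < x / M := by linarith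
  have hrp : (1:ℝ) ≤ (x/M)^α := Real.one_le_rpow hy1 hα
  have hu : 0 < b * (x/M)^α := by positivity
  have h1 : (b * (x/M)^α)^k / (Nat.factorial k : ℝ) ≤ Real.exp (b * (x/M)^α) :=
    Real.pow_div_factorial_le_exp _ hu.le k
  have hpk : 0 < (b * (x/M)^α)^k / (Nat.factorial k : ℝ) := by positivity
  have h2 : Real.exp (-(b * (x/M)^α)) ≤ (Nat.factorial k : ℝ) / (b * (x/M)^α)^k := by
    rw [Real.exp_neg]
    calc (Real.exp (b * (x/M)^α))⁻¹ ≤ ((b * (x/M)^α)^k / (Nat.factorial k : ℝ))⁻¹ :=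
          inv_anti₀ hpk h1
      _ = (Nat.factorial k : ℝ) / (b * (x/M)^α)^k := by rw [inv_div]
  refine h2.trans ?_
  have hpow : ((x/M)^α)^k = (x/M)^(α*(k:ℝ)) := by
    rw [← Real.rpow_natCast ((x/M)^α) k, ← Real.rpow_mul hy0.le]
  have hmono : (x/M)^((m:ℕ):ℝ) ≤ (x/M)^(α*(k:ℝ)) :=
    Real.rpow_le_rpow_of_exponent_le hy1 hkm
  rw [Real.rpow_natCast] at hmono
  have hMx : (M/x)^m = ((x/M)^m)⁻¹ := by rw [← inv_pow, inv_div]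
  have hmpos : (0:ℝ) < (x/M)^m := by positivity
  calc (Nat.factorial k : ℝ) / (b * (x/M)^α)^k = (Nat.factorial k : ℝ) / (b^k * (x/M)^(α*(k:ℝ))) := by
        rw [mul_pow, hpow]
    _ ≤ (Nat.factorial k : ℝ) / (b^k * (x/M)^m) := by
        gcongr
    _ = (Nat.factorial k : ℝ)/b^k * (M/x)^m := by
        rw [hMx, div_mul_eq_div_div, div_eq_mul_inv ((Nat.factorial k : ℝ)/b^k)]

/-- Summability of `exp(-(b*(|t|/M)^α))` over `ℤ`, for `1/4 < α`. -/
lemma summable_exp_int (b M α : ℝ) (hb : 0 < b) (hM : 1 ≤ M) (hα : 1/4 < α) :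
    Summable (fun t : ℤ => Real.exp (-(b * (|(t:ℝ)|/M)^α))) := by
  have hM0 : (0:ℝ) < M := by linarith
  have hg : Summable (fun t : ℤ => ((Nat.factorial 8 : ℝ)/b^8 * M^2) * |(t:ℝ)| ^ (-(2:ℝ))) :=
    (Real.summable_abs_int_rpow (by norm_num : (1:ℝ) < 2)).mul_left _
  apply Summable.of_norm_bounded_eventually hg
  rw [Filter.eventually_cofinite]
  apply Set.Finite.subset (Set.finite_Icc (-⌈M⌉) ⌈M⌉)
  intro t ht
  simp only [Set.mem_setOf_eq, not_le] at ht
  by_contra htmem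
  -- t outside Icc means M < |t|, in particular M ≤ |t|
  have habs : M ≤ |(t:ℝ)| := by
    simp only [Set.mem_Icc, not_and_or, not_le] at htmem
    rcases htmem with h | h
    · have : (t:ℝ) < -⌈M⌉ := by exact_mod_cast Int.cast_lt.mpr h
      have hc : M ≤ (⌈M⌉ : ℝ) := Int.le_ceil M
      rw [abs_of_neg (by linarith)]
      linarith
    · have : ((⌈M⌉:ℤ):ℝ) < (t:ℝ) := by exact_mod_cast Int.cast_lt.mpr h
      have hc : M ≤ (⌈M⌉ : ℝ) := Int.le_ceil M
      rw [abs_of_pos (by linarith)]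
      linarith
  have habs0 : (0:ℝ) < |(t:ℝ)| := by linarith
  have key := exp_core b M |(t:ℝ)| α hb (by linarith) hM0 habs 8 2 (by push_cast; linarith)
  refine absurd ?_ ht.not_ge
  have hnorm : ‖Real.exp (-(b * (|(t:ℝ)|/M)^α))‖ = Real.exp (-(b * (|(t:ℝ)|/M)^α)) :=
    Real.norm_of_nonneg (Real.exp_nonneg _)
  rw [hnorm]
  refine key.trans ?_
  have h2 : |(t:ℝ)| ^ (-(2:ℝ)) = ((|(t:ℝ)|^(2:ℕ)):ℝ)⁻¹ := by
    rw [Real.rpow_neg (abs_nonneg _), ← Real.rpow_natCast]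
    norm_num
  rw [h2, mul_assoc, div_pow]
  exact le_of_eq (by ring)

theorem convolution_low_frequency_stability (C σ N1 : ℝ) (hσ : 1 ≤ σ) (hN1 : 1 ≤ N1)
    (hC : 0 ≤ C) :
    ∃ N0 : ℝ, ∀ N2 : ℝ, N0 ≤ N2 → ∀ H G : ℤ → ℂ,
      (∀ s : ℤ, ‖G s‖ ≤ 1) →
      (∀ s : ℤ, 0 < |(s : ℝ)| → |(s : ℝ)| ≤ N2 → G s = 0) →
      (∀ s : ℤ, 8 * N1 ≤ |(s : ℝ)| →
        ‖H s‖ ≤ C * Real.exp (-(1 / 2) * |(s : ℝ) / (8 * N1)| ^ ((σ + 1) / (4 * σ)))) →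
      ∀ s : ℤ, |(s : ℝ)| < N2 / 4 →
        (‖(∑' t : ℤ, H (s - t) * G t) - H s * G 0‖ ≤
          C * ∑' t : {t : ℤ // N2 ≤ |(t : ℝ)|},
            Real.exp (-(1 / 2) * |((t : ℤ) : ℝ) / (16 * N1)| ^ ((σ + 1) / (4 * σ)))) ∧
        ‖(∑' t : ℤ, H (s - t) * G t) - H s * G 0‖ ≤ N2 ^ (-99 : ℝ) := by
  classical
  have hσ0 : (0:ℝ) < σ := by linarith
  set α := (σ + 1) / (4 * σ) with hαdef
  have hα4 : 1/4 < α := by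
    rw [hαdef, lt_div_iff₀ (by linarith)]
    nlinarith
  have hα0 : (0:ℝ) ≤ α := by linarith
  set M := 16 * N1 with hMdef
  have hM16 : (16:ℝ) ≤ M := by rw [hMdef]; linarith
  have hM0 : (0:ℝ) < M := by linarith
  have hM1 : (1:ℝ) ≤ M := by linarith
  have hSsum : Summable (fun t : ℤ => Real.exp (-((1/4) * (|(t:ℝ)|/M)^α))) :=
    summable_exp_int (1/4) M α (by norm_num) hM1 hα4
  set S := ∑' t : ℤ, Real.exp (-((1/4) * (|(t:ℝ)|/M)^α)) with hSdef
  have hS0 : 0 ≤ S := tsum_nonneg (fun t => (Real.exp_nonneg _))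
  set D := C * S * (Nat.factorial 404 : ℝ) * 4^404 * M^100 with hDdef
  have hD0 : 0 ≤ D := by positivity
  refine ⟨M + 1 + D, fun N2 hN2 H G hG hGvan hH s hs => ?_⟩
  have hN2M : M ≤ N2 := by linarith
  have hN21 : (1:ℝ) ≤ N2 := by linarith
  have hN20 : (0:ℝ) < N2 := by linarith
  have hN2D : D ≤ N2 := by linarith
  have h8N1 : (0:ℝ) < 8 * N1 := by linarith
  have habs : ∀ x : ℝ, |x / M| = |x| / M := fun x => by
    rw [abs_div, abs_of_pos hM0]
  have habs8 : ∀ x : ℝ, |x / (8*N1)| = |x| / (8*N1) := fun x => by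
    rw [abs_div, abs_of_pos h8N1]
  -- geometry
  have hgeo : ∀ t : ℤ, N2 ≤ |(t:ℝ)| → |(t:ℝ)| / 2 ≤ |(s:ℝ) - (t:ℝ)| := by
    intro t ht
    have h1 : |(t:ℝ)| - |(s:ℝ)| ≤ |(s:ℝ) - (t:ℝ)| := by
      rw [abs_sub_comm]; exact abs_sub_abs_le_abs_sub _ _
    have h2 : (0:ℝ) ≤ |(t:ℝ)| := abs_nonneg _
    linarith
  -- per-term bound on the tail
  have hterm : ∀ t : ℤ, N2 ≤ |(t:ℝ)| →
      ‖H (s - t) * G t‖ ≤ C * Real.exp (-(1/2) * |(t:ℝ) / M| ^ α) := by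
    intro t ht
    have hg2 := hgeo t ht
    have hst : 8 * N1 ≤ |((s - t : ℤ):ℝ)| := by
      push_cast
      have h2 : (0:ℝ) ≤ |(t:ℝ)| := abs_nonneg _
      rw [hMdef] at hN2M
      linarith
    have hHb := hH (s - t) hst
    have hexp : Real.exp (-(1/2) * |((s-t:ℤ):ℝ) / (8*N1)| ^ α)
        ≤ Real.exp (-(1/2) * |(t:ℝ) / M| ^ α) := by
      rw [Real.exp_le_exp]
      have hb1 : |(t:ℝ) / M| ^ α ≤ |((s-t:ℤ):ℝ) / (8*N1)| ^ α := by
        apply Real.rpow_le_rpow (by positivity) _ hα0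
        rw [habs, habs8]
        push_cast
        rw [div_le_div_iff₀ hM0 h8N1]
        rw [hMdef]
        nlinarith [abs_nonneg ((s:ℝ) - (t:ℝ))]
      nlinarith
    calc ‖H (s - t) * G t‖ = ‖H (s - t)‖ * ‖G t‖ := norm_mul _ _
      _ ≤ (C * Real.exp (-(1/2) * |((s-t:ℤ):ℝ) / (8*N1)| ^ α)) * 1 :=
          mul_le_mul hHb (hG t) (norm_nonneg _) (by positivity)
      _ ≤ C * Real.exp (-(1/2) * |(t:ℝ) / M| ^ α) := by
          rw [mul_one]; exact mul_le_mul_of_nonneg_left hexp hC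
  set f : ℤ → ℂ := fun t => H (s - t) * G t with hfdef
  have hesum0 : Summable (fun t : ℤ => Real.exp (-((1/2) * (|(t:ℝ)|/M)^α))) :=
    summable_exp_int (1/2) M α (by norm_num) hM1 hα4
  have hconv : ∀ t : ℤ, Real.exp (-((1/2) * (|(t:ℝ)|/M)^α))
      = Real.exp (-(1/2) * |(t:ℝ) / M| ^ α) := by
    intro t; rw [habs, neg_mul]
  have hesum : Summable (fun t : ℤ => Real.exp (-(1/2) * |(t:ℝ) / M| ^ α)) :=
    hesum0.congr hconv
  have hfsum : Summable f := by
    apply Summable.of_norm_bounded_eventually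
      (g := fun t : ℤ => C * Real.exp (-(1/2) * |(t:ℝ) / M| ^ α)) (hesum.mul_left C)
    rw [Filter.eventually_cofinite]
    apply Set.Finite.subset (Set.finite_singleton (0:ℤ))
    intro t ht
    simp only [Set.mem_setOf_eq, not_le] at ht
    simp only [Set.mem_singleton_iff]
    by_contra ht0
    have ht0' : (0:ℝ) < |(t:ℝ)| := abs_pos.mpr (Int.cast_ne_zero.mpr ht0)
    rcases le_or_gt |(t:ℝ)| N2 with hle | hlt
    · have hzero : G t = 0 := hGvan t ht0' hle
      have : ‖f t‖ = 0 := by simp [hfdef, hzero]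
      rw [this] at ht
      have : (0:ℝ) ≤ C * Real.exp (-(1/2) * |(t:ℝ) / M| ^ α) := by positivity
      linarith
    · have := hterm t hlt.le
      have hft : ‖f t‖ ≤ C * Real.exp (-(1/2) * |(t:ℝ) / M| ^ α) := this
      linarith
  set g : ℤ → ℂ := fun t => if t = 0 then 0 else f t with hgdef
  have hf0 : f 0 = H s * G 0 := by rw [hfdef]; simp
  have heq : (∑' t : ℤ, f t) - H s * G 0 = ∑' t : ℤ, g t := by
    rw [hfsum.tsum_eq_add_tsum_ite 0, hf0, add_sub_cancel_left]
  have hgsupp : Function.support g ⊆ {t : ℤ | N2 ≤ |(t:ℝ)|} := by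
    intro t ht
    simp only [Function.mem_support] at ht
    by_contra hmem
    simp only [Set.mem_setOf_eq, not_le] at hmem
    by_cases ht0 : t = 0
    · exact ht (by simp [hgdef, ht0])
    · have ht0' : (0:ℝ) < |(t:ℝ)| := abs_pos.mpr (Int.cast_ne_zero.mpr ht0)
      exact ht (by simp [hgdef, ht0, hfdef, hGvan t ht0' hmem.le])
  have hgsub : ∑' t : ℤ, g t = ∑' t : {t : ℤ // N2 ≤ |(t:ℝ)|}, g t :=
    (tsum_subtype_eq_of_support_subset hgsupp).symm
  have hboundsub : Summable (fun t : {t : ℤ // N2 ≤ |(t:ℝ)|} =>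
      C * Real.exp (-(1/2) * |((t:ℤ):ℝ) / M| ^ α)) :=
    (hesum.mul_left C).subtype _
  have hpart1 : ‖(∑' t : ℤ, f t) - H s * G 0‖ ≤
      C * ∑' t : {t : ℤ // N2 ≤ |(t:ℝ)|}, Real.exp (-(1/2) * |((t:ℤ):ℝ) / M| ^ α) := by
    rw [heq, hgsub, ← tsum_mul_left]
    apply tsum_of_norm_bounded hboundsub.hasSum
    rintro ⟨t, htmem⟩
    have ht0 : t ≠ 0 := by
      intro h
      rw [h] at htmem
      simp only [Int.cast_zero, abs_zero] at htmem
      linarith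
    have : g t = f t := if_neg ht0
    rw [this]
    exact hterm t htmem
  have hN2ne : N2 ≠ 0 := hN20.ne'
  have hA : ∀ t : ℤ, N2 ≤ |(t:ℝ)| → Real.exp (-(1/2) * |(t:ℝ)/M| ^ α) ≤
      Real.exp (-((1/4) * (N2/M)^α)) * Real.exp (-((1/4) * (|(t:ℝ)|/M)^α)) := by
    intro t ht
    rw [← Real.exp_add, Real.exp_le_exp, habs]
    have hmono : (N2/M)^α ≤ (|(t:ℝ)|/M)^α := by
      apply Real.rpow_le_rpow (by positivity) _ hα0
      gcongr
    linarith [hmono]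
  have hTsub1 : Summable (fun t : {t : ℤ // N2 ≤ |(t:ℝ)|} =>
      Real.exp (-(1/2) * |((t:ℤ):ℝ)/M| ^ α)) := hesum.subtype _
  have hTsub2 : Summable (fun t : {t : ℤ // N2 ≤ |(t:ℝ)|} =>
      Real.exp (-((1/4) * (N2/M)^α)) * Real.exp (-((1/4) * (|((t:ℤ):ℝ)|/M)^α))) :=
    (hSsum.subtype _).mul_left _
  have hT1 : (∑' t : {t : ℤ // N2 ≤ |(t:ℝ)|}, Real.exp (-(1/2) * |((t:ℤ):ℝ)/M| ^ α))
      ≤ Real.exp (-((1/4) * (N2/M)^α)) * S := by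
    calc (∑' t : {t : ℤ // N2 ≤ |(t:ℝ)|}, Real.exp (-(1/2) * |((t:ℤ):ℝ)/M| ^ α))
        ≤ ∑' t : {t : ℤ // N2 ≤ |(t:ℝ)|},
          Real.exp (-((1/4) * (N2/M)^α)) * Real.exp (-((1/4) * (|((t:ℤ):ℝ)|/M)^α)) :=
        Summable.tsum_le_tsum (fun t => hA t t.2) hTsub1 hTsub2
      _ = Real.exp (-((1/4) * (N2/M)^α)) *
          ∑' t : {t : ℤ // N2 ≤ |(t:ℝ)|}, Real.exp (-((1/4) * (|((t:ℤ):ℝ)|/M)^α)) :=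
        tsum_mul_left
      _ ≤ Real.exp (-((1/4) * (N2/M)^α)) * S := by
        apply mul_le_mul_of_nonneg_left _ (Real.exp_nonneg _)
        rw [hSdef]
        exact Summable.tsum_le_tsum_of_inj (Subtype.val) Subtype.val_injective
          (fun c _ => Real.exp_nonneg _) (fun i => le_refl _) (hSsum.subtype _) hSsum
  have hAbound : Real.exp (-((1/4) * (N2/M)^α)) ≤
      (Nat.factorial 404 : ℝ) * 4^404 * (M/N2)^100 := by
    have hk : ((100:ℕ):ℝ) ≤ α * ((404:ℕ):ℝ) := by push_cast; nlinarith
    have hcore := exp_core (1/4) M N2 α (by norm_num) hα0 hM0 hN2M 404 100 hk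
    refine hcore.trans (le_of_eq ?_)
    rw [one_div, inv_pow, div_eq_mul_inv, inv_inv]
  have h5 : N2 / N2^(100:ℕ) = N2 ^ (-99:ℝ) := by
    rw [show (-99:ℝ) = -((99:ℕ):ℝ) by norm_num, Real.rpow_neg hN20.le, Real.rpow_natCast]
    field_simp
  have hfinal : C * (∑' t : {t : ℤ // N2 ≤ |(t:ℝ)|},
      Real.exp (-(1/2) * |((t:ℤ):ℝ) / M| ^ α)) ≤ N2 ^ (-99:ℝ) := by
    calc C * (∑' t : {t : ℤ // N2 ≤ |(t:ℝ)|}, Real.exp (-(1/2) * |((t:ℤ):ℝ) / M| ^ α))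
        ≤ C * (Real.exp (-((1/4) * (N2/M)^α)) * S) := mul_le_mul_of_nonneg_left hT1 hC
      _ ≤ C * (((Nat.factorial 404 : ℝ) * 4^404 * (M/N2)^100) * S) :=
        mul_le_mul_of_nonneg_left (mul_le_mul_of_nonneg_right hAbound hS0) hC
      _ = D / N2^(100:ℕ) := by rw [hDdef, div_pow]; field_simp
      _ ≤ N2 / N2^(100:ℕ) := by gcongr
      _ = N2 ^ (-99:ℝ) := h5
  exact ⟨hpart1, hpart1.trans hfinal⟩
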